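/- Let F₂ be the free group on generators t₁, t₂, let w₁ = t₁ t₂ t₁⁻¹ t₂⁻¹ t₁ and w₂ = t₂, and let J be the subgroup of F₂ generated by w₁ and w₂. Then J does not contain any pair of elements (z₁, z₂) such that (z₁, z₂) is a free basis of F₂. -/
import Mathlib


/-- The free group on two generators. -/
abbrev F2 : Type := FreeGroup (Fin 2)

/-- The first generator `t₁`. -/
def t1 : F2 := FreeGroup.of 0

/-- The second generator `t₂`. -/
def t2 : F2 := FreeGroup.of 1

private def cperm : Equiv.Perm (Fin 3) := finRotate 3
private def tperm : Equiv.Perm (Fin 3) := Equiv.swap 0 1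

private def phi : F2 →* Equiv.Perm (Fin 3) := FreeGroup.lift ![cperm, tperm]

/-- With `w₁ = t₁ t₂ t₁⁻¹ t₂⁻¹ t₁`, `w₂ = t₂`, the subgroup `J = ⟨w₁, w₂⟩` contains no pair
of elements forming a free basis (= generating pair) of `F₂`. -/
theorem stmt10 (J : Subgroup F2)
    (hJ : J = Subgroup.closure ({t1 * t2 * t1⁻¹ * t2⁻¹ * t1, t2} : Set F2)) :
    ∀ z₁ z₂ : F2, z₁ ∈ J → z₂ ∈ J →
      Subgroup.closure ({z₁, z₂} : Set F2) ≠ ⊤ := by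
  intro z₁ z₂ hz₁ hz₂ htop
  have hle : Subgroup.closure ({z₁, z₂} : Set F2) ≤ J := by
    rw [Subgroup.closure_le]
    rintro x (rfl | rfl) <;> simpa
  have hJtop : J = ⊤ := top_unique (htop ▸ hle)
  have ht1 : t1 ∈ J := hJtop ▸ Subgroup.mem_top t1
  subst hJ
  -- push through phi
  have hphi1 : phi t1 = cperm := by
    simp [phi, t1, FreeGroup.lift_apply_of]
  have hphi2 : phi t2 = tperm := by
    simp [phi, t2, FreeGroup.lift_apply_of]
  have hw1 : phi (t1 * t2 * t1⁻¹ * t2⁻¹ * t1) = 1 := by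
    simp only [map_mul, map_inv, hphi1, hphi2]
    decide
  have hsub : Subgroup.closure ({t1 * t2 * t1⁻¹ * t2⁻¹ * t1, t2} : Set F2) ≤
      Subgroup.comap phi (Subgroup.zpowers tperm) := by
    rw [Subgroup.closure_le]
    rintro x (rfl | rfl)
    · simp only [SetLike.mem_coe, Subgroup.mem_comap, hw1]; exact one_mem _
    · simp only [SetLike.mem_coe, Subgroup.mem_comap, hphi2]; exact Subgroup.mem_zpowers _
  have hc : cperm ∈ Subgroup.zpowers tperm := by
    have := hsub ht1
    rwa [Subgroup.mem_comap, hphi1] at this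
  obtain ⟨n, hn⟩ := Subgroup.mem_zpowers_iff.mp hc
  have h2 : tperm * tperm = 1 := by decide
  have key : tperm ^ n = 1 ∨ tperm ^ n = tperm := by
    rcases Int.even_or_odd n with ⟨k, hk⟩ | ⟨k, hk⟩
    · left
      subst hk
      rw [← two_mul, zpow_mul]
      have : tperm ^ (2 : ℤ) = 1 := by rw [zpow_two]; exact h2
      rw [this, one_zpow]
    · right
      subst hk
      rw [zpow_add, zpow_mul, zpow_one]
      have : tperm ^ (2 : ℤ) = 1 := by rw [zpow_two]; exact h2
      rw [this, one_zpow, one_mul]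
  rcases key with h | h <;> rw [hn] at h <;> revert h <;> decide
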